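/- Let f(k) = k and let m = max(0, μ+1−d). Then for every d ≥ 1 and μ ≥ 0, 2d · 𝒩_Σ(d,μ,f) = (1+μ) · C(2d+μ, μ+1) − m · C(2d+m−1, m). -/

import Mathlib

open Finset


/-- Multi-indices `i : Fin d → ℕ` with `i k ≥ 1` for all `k` and
`max d (μ+1) ≤ ∑ k, i k ≤ d + μ`. -/
def smolyakSigmaIndices (d μ : ℕ) : Finset (Fin d → ℕ) :=
  (Fintype.piFinset fun _ => Finset.Icc 1 (d + μ)).filter fun i =>
    max d (μ + 1) ≤ ∑ k, i k ∧ ∑ k, i k ≤ d + μ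

/-- `𝒩_Σ(d, μ, f) = ∑_{max(d, μ+1) ≤ |i| ≤ d + μ, i ≥ 1} ∏ₖ f(iₖ)`. -/
def calNSigma (f : ℕ → ℕ) (d μ : ℕ) : ℕ :=
  ∑ i ∈ smolyakSigmaIndices d μ, ∏ k, f (i k)


lemma hockeyAux (s : ℕ) : ∀ t : ℕ, ∑ m ∈ range t, (m + s).choose s = (t + s).choose (s + 1)
  | 0 => by simp [Nat.choose_eq_zero_of_lt]
  | (t+1) => by
    rw [Finset.sum_range_succ, hockeyAux s t, show t + 1 + s = (t + s) + 1 by omega,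
      Nat.choose_succ_succ]
    simp only [Nat.succ_eq_add_one]
    omega

lemma convAux (s : ℕ) : ∀ m : ℕ,
    ∑ a ∈ range (m + 1), (a + 1) * ((m - a) + s).choose s = (m + s + 2).choose (s + 2)
  | 0 => by simp
  | (m+1) => by
    have h1 : ∀ a, (a + 1) * ((m + 1 - a) + s).choose s
        = a * ((m + 1 - a) + s).choose s + ((m + 1 - a) + s).choose s := fun a => by ring
    simp only [h1, Finset.sum_add_distrib]
    have h2 : ∑ a ∈ range (m + 2), a * ((m + 1 - a) + s).choose s
        = (m + s + 2).choose (s + 2) := by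
      rw [Finset.sum_range_succ']
      simp only [Nat.zero_mul, Nat.add_zero]
      rw [show (∑ i ∈ range (m+1), (i+1) * ((m + 1 - (i+1)) + s).choose s)
          = ∑ i ∈ range (m+1), (i+1) * ((m - i) + s).choose s from
        Finset.sum_congr rfl fun i _ => by rw [Nat.succ_sub_succ], convAux s m]
    have h3 : ∑ a ∈ range (m + 2), ((m + 1 - a) + s).choose s
        = (m + 2 + s).choose (s + 1) := by
      rw [← hockeyAux s (m + 2), ← Finset.sum_range_reflect]
      exact Finset.sum_congr rfl fun i hi => by
        simp only [Finset.mem_range] at hi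
        congr 2
        omega
    have pas : ((m + s + 2) + 1).choose (s + 2)
        = (m + s + 2).choose (s + 1) + (m + s + 2).choose (s + 2) :=
      Nat.choose_succ_succ _ _
    rw [h2, h3, show m + 1 + s + 2 = (m + s + 2) + 1 by omega, pas,
      show m + 2 + s = m + s + 2 by omega]
    omega

lemma sum_att_succ (g : ℕ → ℕ) (d m : ℕ) :
    ∑ x ∈ Finset.Nat.antidiagonalTuple (d + 1) m, ∏ k, g (x k) =
      ∑ p ∈ Finset.HasAntidiagonal.antidiagonal m, g p.1 *
        ∑ y ∈ Finset.Nat.antidiagonalTuple d p.2, ∏ k, g (y k) := by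
  simp_rw [Finset.mul_sum]
  rw [Finset.sum_sigma']
  refine Finset.sum_nbij'
    (fun x : Fin (d+1) → ℕ =>
      (⟨(x 0, ∑ k : Fin d, x k.succ), Fin.tail x⟩ : (_ : ℕ × ℕ) × (Fin d → ℕ)))
    (fun q => Fin.cons q.1.1 q.2) ?_ ?_ ?_ ?_ ?_
  · intro x hx
    rw [Finset.Nat.mem_antidiagonalTuple, Fin.sum_univ_succ] at hx
    simp only [Finset.mem_sigma, Finset.HasAntidiagonal.mem_antidiagonal,
      Finset.Nat.mem_antidiagonalTuple]
    exact ⟨hx, rfl⟩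
  · rintro ⟨⟨a, b⟩, y⟩ hq
    simp only [Finset.mem_sigma, Finset.HasAntidiagonal.mem_antidiagonal,
      Finset.Nat.mem_antidiagonalTuple] at hq
    rw [Finset.Nat.mem_antidiagonalTuple, Fin.sum_cons, hq.2, hq.1]
  · intro x _
    exact Fin.cons_self_tail x
  · rintro ⟨⟨a, b⟩, y⟩ hq
    simp only [Finset.mem_sigma, Finset.HasAntidiagonal.mem_antidiagonal,
      Finset.Nat.mem_antidiagonalTuple] at hq
    simp [Fin.cons_zero, Fin.cons_succ, Fin.tail_cons, hq.2]
  · intro x _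
    rw [Fin.prod_univ_succ]
    rfl

lemma Gval (e : ℕ) : ∀ m : ℕ,
    ∑ x ∈ Finset.Nat.antidiagonalTuple (e + 1) m, ∏ k, (x k + 1)
      = (m + (2 * e + 1)).choose (2 * e + 1) := by
  induction e with
  | zero =>
    intro m
    rw [Finset.Nat.antidiagonalTuple_one]
    simp [Nat.choose_one_right]
  | succ e ih =>
    intro m
    have h := sum_att_succ (fun t => t + 1) (e + 1) m
    rw [h]
    simp_rw [ih]
    rw [Finset.Nat.sum_antidiagonal_eq_sum_range_succ_mk]
    simp only
    rw [show (∑ a ∈ range (m + 1), (a + 1) * ((m - a) + (2 * e + 1)).choose (2 * e + 1))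
        = (m + (2 * e + 1) + 2).choose ((2 * e + 1) + 2) from convAux (2 * e + 1) m]
    congr 1 <;> omega


lemma calNSigma_eq (d μ : ℕ) (hd : 1 ≤ d) :
    calNSigma (fun k => k) d μ =
      ∑ n ∈ Finset.Icc (max d (μ + 1)) (d + μ),
        ∑ j ∈ Finset.Nat.antidiagonalTuple d (n - d), ∏ k, (j k + 1) := by
  rw [calNSigma, Finset.sum_sigma']
  refine Finset.sum_nbij'
    (fun i : Fin d → ℕ =>
      (⟨∑ k, i k, fun k => i k - 1⟩ : (_ : ℕ) × (Fin d → ℕ)))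
    (fun q => fun k => q.2 k + 1) ?_ ?_ ?_ ?_ ?_
  · intro i hi
    simp only [smolyakSigmaIndices, Finset.mem_filter, Fintype.mem_piFinset,
      Finset.mem_Icc] at hi
    obtain ⟨hbox, hlo, hhi⟩ := hi
    have hone : ∀ k, 1 ≤ i k := fun k => (hbox k).1
    have hsum : ∑ k, i k = (∑ k, (i k - 1)) + d := by
      calc ∑ k, i k = ∑ k : Fin d, ((i k - 1) + 1) :=
            Finset.sum_congr rfl fun k _ => by have := hone k; omega
        _ = (∑ k, (i k - 1)) + d := by rw [Finset.sum_add_distrib]; simp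
    simp only [Finset.mem_sigma, Finset.mem_Icc, Finset.Nat.mem_antidiagonalTuple]
    exact ⟨⟨hlo, hhi⟩, by omega⟩
  · rintro ⟨n, j⟩ hq
    simp only [Finset.mem_sigma, Finset.mem_Icc, Finset.Nat.mem_antidiagonalTuple] at hq
    obtain ⟨⟨hlo, hhi⟩, hsum⟩ := hq
    have hdn : d ≤ n := le_trans (le_max_left _ _) hlo
    have hsum' : ∑ k, (j k + 1) = (∑ k, j k) + d := by
      rw [Finset.sum_add_distrib]; simp
    simp only [smolyakSigmaIndices, Finset.mem_filter, Fintype.mem_piFinset,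
      Finset.mem_Icc, hsum']
    have hjk : ∀ k, j k ≤ ∑ k', j k' := fun k =>
      Finset.single_le_sum (fun _ _ => Nat.zero_le _) (Finset.mem_univ k)
    refine ⟨fun k => ⟨by omega, ?_⟩, by omega, by omega⟩
    have := hjk k
    omega
  · intro i hi
    simp only [smolyakSigmaIndices, Finset.mem_filter, Fintype.mem_piFinset,
      Finset.mem_Icc] at hi
    funext k
    have := (hi.1 k).1
    simp only
    omega
  · rintro ⟨n, j⟩ hq
    simp only [Finset.mem_sigma, Finset.mem_Icc, Finset.Nat.mem_antidiagonalTuple] at hq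
    obtain ⟨⟨hlo, hhi⟩, hsum⟩ := hq
    have hdn : d ≤ n := le_trans (le_max_left _ _) hlo
    have hsum' : ∑ k, (j k + 1) = (∑ k, j k) + d := by
      rw [Finset.sum_add_distrib]; simp
    refine Sigma.ext (by show (∑ k : Fin d, (j k + 1)) = n; rw [hsum']; omega) (heq_of_eq ?_)
    funext k
    simp
  · intro i hi
    simp only [smolyakSigmaIndices, Finset.mem_filter, Fintype.mem_piFinset,
      Finset.mem_Icc] at hi
    exact Finset.prod_congr rfl fun k _ => by have := (hi.1 k).1; simp; omega

lemma calNSigma_closed (e μ : ℕ) :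
    calNSigma (fun k => k) (e + 1) μ
      + ((μ + 1 - (e + 1)) + (2 * e + 1)).choose (2 * e + 2)
    = (μ + (2 * e + 2)).choose (2 * e + 2) := by
  set m₀ := μ + 1 - (e + 1) with hm₀
  have h1 : calNSigma (fun k => k) (e + 1) μ
      = ∑ m ∈ Finset.Icc m₀ μ, (m + (2 * e + 1)).choose (2 * e + 1) := by
    rw [calNSigma_eq _ _ (by omega)]
    have hIcc : Finset.Icc (max (e + 1) (μ + 1)) (e + 1 + μ)
        = Finset.map (addRightEmbedding (e + 1)) (Finset.Icc m₀ μ) := by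
      rw [Finset.map_add_right_Icc]
      congr 1 <;> omega
    rw [hIcc, Finset.sum_map]
    refine Finset.sum_congr rfl fun m _ => ?_
    rw [show addRightEmbedding (e + 1) m = m + (e + 1) from rfl, Nat.add_sub_cancel, Gval e m]
  have h2 : (∑ m ∈ range m₀, (m + (2 * e + 1)).choose (2 * e + 1))
      + ∑ m ∈ Finset.Icc m₀ μ, (m + (2 * e + 1)).choose (2 * e + 1)
      = ∑ m ∈ range (μ + 1), (m + (2 * e + 1)).choose (2 * e + 1) := by
    rw [← Finset.Ico_add_one_right_eq_Icc, Finset.range_eq_Ico, Finset.range_eq_Ico]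
    exact Finset.sum_Ico_consecutive (fun m => (m + (2 * e + 1)).choose (2 * e + 1)) (Nat.zero_le _) (by omega : m₀ ≤ μ + 1)
  have h3 := hockeyAux (2 * e + 1) (μ + 1)
  have h4 := hockeyAux (2 * e + 1) m₀
  rw [h1]
  have : μ + 1 + (2 * e + 1) = μ + 2 * e + 2 := by omega
  rw [this] at h3
  have : (2 * e + 1) + 1 = 2 * e + 2 := by omega
  rw [this] at h3 h4
  have : μ + (2 * e + 2) = μ + 2 * e + 2 := by omega
  rw [this]
  omega

lemma idI (e μ : ℕ) :
    (μ + 1) * (μ + 2 * e + 2).choose (μ + 1)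
      = (2 * e + 2) * (μ + 2 * e + 2).choose (2 * e + 2) := by
  have a3 : (μ + 2 * e + 1).choose μ = (μ + 2 * e + 1).choose (2 * e + 1) := by
    have h := Nat.choose_symm (n := μ + 2 * e + 1) (k := μ) (by omega)
    rw [show μ + 2 * e + 1 - μ = 2 * e + 1 by omega] at h
    exact h.symm
  have a1 := Nat.add_one_mul_choose_eq (μ + 2 * e + 1) μ
  have a2 := Nat.add_one_mul_choose_eq (μ + 2 * e + 1) (2 * e + 1)
  rw [mul_comm (μ + 1), mul_comm (2 * e + 2),
    show μ + 2 * e + 2 = μ + 2 * e + 1 + 1 by omega,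
    show 2 * e + 2 = 2 * e + 1 + 1 by omega, ← a1, ← a2, a3]

lemma idII (e m₀ : ℕ) :
    (2 * e + 2) * ((m₀ + 2 * e + 1).choose (2 * e + 2))
      = m₀ * ((m₀ + 2 * e + 1).choose m₀) := by
  cases m₀ with
  | zero => simp [Nat.choose_eq_zero_of_lt]
  | succ t =>
    have a3 : (t + 2 * e + 1).choose t = (t + 2 * e + 1).choose (2 * e + 1) := by
      have h := Nat.choose_symm (n := t + 2 * e + 1) (k := t) (by omega)
      rw [show t + 2 * e + 1 - t = 2 * e + 1 by omega] at h
      exact h.symm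
    have a1 := Nat.add_one_mul_choose_eq (t + 2 * e + 1) (2 * e + 1)
    have a2 := Nat.add_one_mul_choose_eq (t + 2 * e + 1) t
    rw [show t + 1 + 2 * e + 1 = t + 2 * e + 1 + 1 by omega,
      mul_comm (2 * e + 2), mul_comm (t + 1),
      show 2 * e + 2 = 2 * e + 1 + 1 by omega, ← a1, ← a2, a3]


/-- For `f(k) = k` and `m = max(0, μ+1-d)`,
`2d · 𝒩_Σ(d, μ, f) = (1+μ) C(2d+μ, μ+1) - m C(2d+m-1, m)` (an identity in `ℤ`). -/
theorem calNSigma_of_id (d μ : ℕ) (hd : 1 ≤ d) :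
    (2 * d * calNSigma (fun k => k) d μ : ℤ) =
      (1 + μ : ℤ) * ((2 * d + μ).choose (μ + 1) : ℤ) -
        (μ + 1 - d : ℕ) * (((2 * d + (μ + 1 - d) - 1).choose (μ + 1 - d) : ℕ) : ℤ) := by
  obtain ⟨e, rfl⟩ : ∃ e, d = e + 1 := ⟨d - 1, by omega⟩
  set m₀ := μ + 1 - (e + 1) with hm₀
  rw [show 2 * (e + 1) + μ = μ + 2 * e + 2 by omega,
    show 2 * (e + 1) + m₀ - 1 = m₀ + 2 * e + 1 by omega]
  have c1 : (calNSigma (fun k => k) (e + 1) μ : ℤ)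
      + ((m₀ + 2 * e + 1).choose (2 * e + 2) : ℤ)
      = ((μ + 2 * e + 2).choose (2 * e + 2) : ℤ) := by
    exact_mod_cast calNSigma_closed e μ
  have c2 : ((μ : ℤ) + 1) * ((μ + 2 * e + 2).choose (μ + 1) : ℤ)
      = (2 * (e : ℤ) + 2) * ((μ + 2 * e + 2).choose (2 * e + 2) : ℤ) := by
    exact_mod_cast idI e μ
  have c3 : (2 * (e : ℤ) + 2) * ((m₀ + 2 * e + 1).choose (2 * e + 2) : ℤ)
      = (m₀ : ℤ) * ((m₀ + 2 * e + 1).choose m₀ : ℤ) := by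
    exact_mod_cast idII e m₀
  push_cast
  linear_combination (2 * (e : ℤ) + 2) * c1 - c2 - c3
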